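/- The minimizer map a* is uniformly Lipschitz: there exists a constant C > 0 such that for all x ∈ [d], η,η′ ∈ P([d]) and p,p′ ∈ ℝ^d, ‖a*(x,η,p) − a*(x,η′,p′)‖ ≤ C(‖η−η′‖ + ‖p−p′‖). -/

import Mathlib

noncomputable section

def eucNorm {d : ℕ} (v : Fin d → ℝ) : ℝ := Real.sqrt (∑ x, v x ^ 2)

def probSimplex (d : ℕ) : Set (Fin d → ℝ) := {η | (∀ x, 0 ≤ η x) ∧ ∑ x, η x = 1}

def deltaOp {d : ℕ} (x : Fin d) (φ : Fin d → ℝ) : Fin d → ℝ := fun l => φ l - φ x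

def dotCLM {d : ℕ} (v : Fin d → ℝ) : (Fin d → ℝ) →L[ℝ] ℝ :=
  ∑ y, v y • ContinuousLinearMap.proj y

def ctrlSet (d : ℕ) (κ : ℝ) (x : Fin d) : Set (Fin d → ℝ) :=
  {a | (∀ y, y ≠ x → κ ≤ a y) ∧ a x = -∑ y ∈ Finset.univ.erase x, a y}

def offSum {d : ℕ} (x : Fin d) (a p : Fin d → ℝ) : ℝ := ∑ y ∈ Finset.univ.erase x, a y * p y

/-- `ℝ^d_x`: admissible rate vectors out of state `x`. -/
def rateSet (d : ℕ) (x : Fin d) : Set (Fin d → ℝ) := ctrlSet d 0 x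

lemma eucNorm_nonneg' {d : ℕ} (v : Fin d → ℝ) : 0 ≤ eucNorm v := Real.sqrt_nonneg _

lemma eucNorm_sq' {d : ℕ} (v : Fin d → ℝ) : eucNorm v ^ 2 = ∑ x, v x ^ 2 :=
  Real.sq_sqrt (Finset.sum_nonneg fun _ _ => sq_nonneg _)

lemma eucNorm_sub_comm' {d : ℕ} (u v : Fin d → ℝ) : eucNorm (u - v) = eucNorm (v - u) := by
  unfold eucNorm
  congr 1
  apply Finset.sum_congr rfl
  intro y _
  simp only [Pi.sub_apply]
  ring

lemma cs_aux {d : ℕ} (s : Finset (Fin d)) (u v : Fin d → ℝ) :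
    |∑ y ∈ s, u y * v y| ≤ eucNorm u * eucNorm v := by
  have h := Finset.sum_mul_sq_le_sq_mul_sq s u v
  have h1 : ∑ y ∈ s, u y ^ 2 ≤ ∑ y, u y ^ 2 :=
    Finset.sum_le_sum_of_subset_of_nonneg (Finset.subset_univ _) (fun _ _ _ => sq_nonneg _)
  have h2 : ∑ y ∈ s, v y ^ 2 ≤ ∑ y, v y ^ 2 :=
    Finset.sum_le_sum_of_subset_of_nonneg (Finset.subset_univ _) (fun _ _ _ => sq_nonneg _)
  have hs2 : (0:ℝ) ≤ ∑ y ∈ s, v y ^ 2 := Finset.sum_nonneg fun _ _ => sq_nonneg _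
  have key : (∑ y ∈ s, u y * v y) ^ 2 ≤ (eucNorm u * eucNorm v) ^ 2 := by
    rw [mul_pow, eucNorm_sq', eucNorm_sq']
    calc (∑ y ∈ s, u y * v y) ^ 2 ≤ (∑ y ∈ s, u y ^ 2) * ∑ y ∈ s, v y ^ 2 := h
    _ ≤ (∑ y, u y ^ 2) * ∑ y, v y ^ 2 :=
        mul_le_mul h1 h2 hs2 (Finset.sum_nonneg fun _ _ => sq_nonneg _)
  calc |∑ y ∈ s, u y * v y| = Real.sqrt ((∑ y ∈ s, u y * v y) ^ 2) :=
        (Real.sqrt_sq_eq_abs _).symm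
  _ ≤ Real.sqrt ((eucNorm u * eucNorm v) ^ 2) := Real.sqrt_le_sqrt key
  _ = eucNorm u * eucNorm v :=
        Real.sqrt_sq (mul_nonneg (eucNorm_nonneg' u) (eucNorm_nonneg' v))

lemma dotCLM_apply' {d : ℕ} (v w : Fin d → ℝ) : dotCLM v w = ∑ y, v y * w y := by
  simp [dotCLM, ContinuousLinearMap.sum_apply, mul_comm]

/-- the minimizer map `a*` is uniformly Lipschitz in `(η,p)`. -/
theorem minimizer_uniformly_lipschitz
    (d : ℕ) (hd : 2 ≤ d) (cL cV : ℝ) (hcL : 0 < cL) (hcV : 0 < cV)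
    (f : Fin d → (Fin d → ℝ) → (Fin d → ℝ) → ℝ)
    (Daf : Fin d → (Fin d → ℝ) → (Fin d → ℝ) → (Fin d → ℝ))
    -- continuity of f
    (hcont : ∀ x : Fin d, Continuous (fun q : (Fin d → ℝ) × (Fin d → ℝ) => f x q.1 q.2))
    -- differentiability with respect to a, with gradient ∇_a f = Daf
    (hdiff : ∀ (x : Fin d) (η a : Fin d → ℝ), HasFDerivAt (f x η) (dotCLM (Daf x η a)) a)
    -- Lipschitz continuity in η of f and of ∇_a f
    (hlip : ∀ (x : Fin d) (a : Fin d → ℝ), ∀ η ∈ probSimplex d, ∀ η' ∈ probSimplex d,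
      |f x η a - f x η' a| + eucNorm (Daf x η a - Daf x η' a) ≤ cL * eucNorm (η - η'))
    -- strong convexity
    (hconv : ∀ x : Fin d, ∀ η ∈ probSimplex d, ∀ a ∈ rateSet d x, ∀ a' ∈ rateSet d x,
      f x η a - f x η a' ≥ (∑ y, Daf x η a' y * (a y - a' y)) + cV * eucNorm (a - a') ^ 2)
    -- superlinearity
    (hsuper : ∀ x : Fin d, ∀ η ∈ probSimplex d, ∀ M : ℝ, ∃ R : ℝ,
      ∀ a ∈ rateSet d x, R ≤ eucNorm a → M ≤ f x η a / eucNorm a)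
    -- a* is the unique minimizer of a ↦ f(x,η,a) + ∑_{y≠x} a_y p_y over ℝ^d_x
    (astar : Fin d → (Fin d → ℝ) → (Fin d → ℝ) → (Fin d → ℝ))
    (hmem : ∀ x : Fin d, ∀ η ∈ probSimplex d, ∀ p : Fin d → ℝ, astar x η p ∈ rateSet d x)
    (hmin : ∀ x : Fin d, ∀ η ∈ probSimplex d, ∀ p : Fin d → ℝ, ∀ a ∈ rateSet d x,
      f x η (astar x η p) + offSum x (astar x η p) p ≤ f x η a + offSum x a p)
    (huniq : ∀ x : Fin d, ∀ η ∈ probSimplex d, ∀ p : Fin d → ℝ, ∀ a ∈ rateSet d x,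
      (∀ b ∈ rateSet d x, f x η a + offSum x a p ≤ f x η b + offSum x b p) →
      a = astar x η p) :
    ∃ C > (0:ℝ), ∀ x : Fin d, ∀ η ∈ probSimplex d, ∀ η' ∈ probSimplex d,
      ∀ p p' : Fin d → ℝ,
        eucNorm (astar x η p - astar x η' p')
          ≤ C * (eucNorm (η - η') + eucNorm (p - p')) := by
  -- Step 1: quadratic growth at the minimizer
  have key : ∀ (x : Fin d), ∀ η ∈ probSimplex d, ∀ (p : Fin d → ℝ), ∀ b ∈ rateSet d x,
      cV * eucNorm (b - astar x η p) ^ 2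
        ≤ (f x η b + offSum x b p) - (f x η (astar x η p) + offSum x (astar x η p) p) := by
    intro x η hη p b hb
    set a := astar x η p with ha
    have haR : a ∈ rateSet d x := hmem x η hη p
    set N := eucNorm (b - a) with hN
    have hNnn : 0 ≤ N := eucNorm_nonneg' _
    have main : ∀ t : ℝ, 0 < t → t ≤ 1 →
        cV * (1 - t) * N ^ 2 ≤ (f x η b + offSum x b p) - (f x η a + offSum x a p) := by
      intro t ht0 ht1
      set m : Fin d → ℝ := fun y => a y + t * (b y - a y) with hm
      have hmR : m ∈ rateSet d x := by
        constructor
        · intro y hy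
          have h1 := haR.1 y hy
          have h2 := hb.1 y hy
          simp only [hm]
          nlinarith
        · have ea : a x = -∑ y ∈ Finset.univ.erase x, a y := haR.2
          have eb : b x = -∑ y ∈ Finset.univ.erase x, b y := hb.2
          have : ∑ y ∈ Finset.univ.erase x, m y
              = ∑ y ∈ Finset.univ.erase x, a y
                + t * (∑ y ∈ Finset.univ.erase x, b y - ∑ y ∈ Finset.univ.erase x, a y) := by
            simp only [hm]
            rw [Finset.sum_add_distrib, ← Finset.sum_sub_distrib, Finset.mul_sum]
          simp only [hm]
          rw [this, ea, eb]
          ring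
      have h1 := hconv x η hη a haR m hmR
      have h2 := hconv x η hη b hb m hmR
      have e1 : eucNorm (a - m) ^ 2 = t ^ 2 * N ^ 2 := by
        rw [eucNorm_sq', hN, eucNorm_sq', Finset.mul_sum]
        apply Finset.sum_congr rfl
        intro y _
        simp only [Pi.sub_apply, hm]
        ring
      have e2 : eucNorm (b - m) ^ 2 = (1 - t) ^ 2 * N ^ 2 := by
        rw [eucNorm_sq', hN, eucNorm_sq', Finset.mul_sum]
        apply Finset.sum_congr rfl
        intro y _
        simp only [Pi.sub_apply, hm]
        ring
      have e3 : (1 - t) * (∑ y, Daf x η m y * (a y - m y))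
          + t * (∑ y, Daf x η m y * (b y - m y)) = 0 := by
        rw [Finset.mul_sum, Finset.mul_sum, ← Finset.sum_add_distrib]
        apply Finset.sum_eq_zero
        intro y _
        simp only [hm]
        ring
      have e4 : offSum x m p = (1 - t) * offSum x a p + t * offSum x b p := by
        unfold offSum
        rw [Finset.mul_sum, Finset.mul_sum, ← Finset.sum_add_distrib]
        apply Finset.sum_congr rfl
        intro y _
        simp only [hm]
        ring
      rw [e1] at h1
      rw [e2] at h2
      have hGm := hmin x η hη p m hmR
      rw [← ha] at hGm
      have c1 : (1 - t) * (f x η a - f x η m)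
          ≥ (1 - t) * ((∑ y, Daf x η m y * (a y - m y)) + cV * (t ^ 2 * N ^ 2)) :=
        mul_le_mul_of_nonneg_left h1 (by linarith)
      have c2 : t * (f x η b - f x η m)
          ≥ t * ((∑ y, Daf x η m y * (b y - m y)) + cV * ((1 - t) ^ 2 * N ^ 2)) :=
        mul_le_mul_of_nonneg_left h2 (le_of_lt ht0)
      have comb : (1 - t) * f x η a + t * f x η b - f x η m ≥ cV * t * (1 - t) * N ^ 2 := by
        nlinarith [c1, c2, e3]
      have h5 : t * (cV * (1 - t) * N ^ 2)
          ≤ t * ((f x η b + offSum x b p) - (f x η a + offSum x a p)) := by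
        nlinarith [hGm, e4, comb]
      exact (mul_le_mul_iff_right₀ ht0).mp h5
    have hD : 0 ≤ (f x η b + offSum x b p) - (f x η a + offSum x a p) := by
      have := hmin x η hη p b hb
      rw [← ha] at this
      linarith
    rcases eq_or_lt_of_le hNnn with hN0 | hN0
    · rw [← hN0]
      simpa using hD
    · by_contra hcon
      push_neg at hcon
      set D := (f x η b + offSum x b p) - (f x η a + offSum x a p) with hDdef
      have hδ : 0 < cV * N ^ 2 - D := by linarith
      set δ := cV * N ^ 2 - D with hδdef
      have hNsq : 0 < cV * N ^ 2 := by positivity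
      set t := δ / (2 * (cV * N ^ 2)) with ht
      have ht0 : 0 < t := by positivity
      have hδle : δ ≤ cV * N ^ 2 := by linarith
      have ht1 : t ≤ 1 := by
        rw [ht, div_le_one (by positivity)]
        linarith
      have hmain := main t ht0 ht1
      have htval : t * (cV * N ^ 2) = δ / 2 := by
        rw [ht]
        field_simp
      nlinarith [hmain]
  -- Step 2: the Lipschitz estimate
  refine ⟨max cL 1 / (2 * cV), by positivity, ?_⟩
  intro x η hη η' hη' p p'
  set a := astar x η p with ha
  set a' := astar x η' p' with ha'
  set X := eucNorm (a - a') with hX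
  set Dη := eucNorm (η - η') with hDη
  set Dp := eucNorm (p - p') with hDp
  have hXnn : 0 ≤ X := eucNorm_nonneg' _
  have hDηnn : 0 ≤ Dη := eucNorm_nonneg' _
  have hDpnn : 0 ≤ Dp := eucNorm_nonneg' _
  have k1 := key x η hη p a' (hmem x η' hη' p')
  have k2 := key x η' hη' p' a (hmem x η hη p)
  rw [← ha] at k1
  rw [← ha'] at k2
  have esw : eucNorm (a' - a) = X := by rw [hX]; exact eucNorm_sub_comm' a' a
  rw [esw] at k1
  rw [← hX] at k2
  -- mean value estimate for the η-difference of f along the segment [a, a']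
  have hB : (f x η a' - f x η' a') - (f x η a - f x η' a) ≤ cL * Dη * X := by
    set m : ℝ → (Fin d → ℝ) := fun s => a + s • (a' - a) with hm
    set φ : ℝ → ℝ := fun s => f x η (m s) - f x η' (m s) with hφ
    set φ' : ℝ → ℝ := fun s =>
      dotCLM (Daf x η (m s) - Daf x η' (m s)) (a' - a) with hφ'
    have hmderiv : ∀ s : ℝ, HasDerivAt m (a' - a) s := by
      intro s
      have : HasDerivAt (fun s : ℝ => s • (a' - a)) ((1:ℝ) • (a' - a)) s :=
        (hasDerivAt_id s).smul_const (a' - a)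
      exact (by simpa using this : HasDerivAt (fun s : ℝ => s • (a' - a)) (a' - a) s).const_add a
    have hφderiv : ∀ s : ℝ, HasDerivAt φ (φ' s) s := by
      intro s
      have d1 : HasDerivAt (fun s => f x η (m s)) (dotCLM (Daf x η (m s)) (a' - a)) s :=
        (hdiff x η (m s)).comp_hasDerivAt s (hmderiv s)
      have d2 : HasDerivAt (fun s => f x η' (m s)) (dotCLM (Daf x η' (m s)) (a' - a)) s :=
        (hdiff x η' (m s)).comp_hasDerivAt s (hmderiv s)
      have := d1.sub d2
      have heq : dotCLM (Daf x η (m s)) (a' - a) - dotCLM (Daf x η' (m s)) (a' - a)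
          = φ' s := by
        simp only [hφ']
        rw [dotCLM_apply', dotCLM_apply', dotCLM_apply', ← Finset.sum_sub_distrib]
        apply Finset.sum_congr rfl
        intro y _
        simp only [Pi.sub_apply]
        ring
      rw [heq] at this
      exact this
    have hbound : ∀ s : ℝ, |φ' s| ≤ cL * Dη * X := by
      intro s
      have hcs : |φ' s| ≤ eucNorm (Daf x η (m s) - Daf x η' (m s)) * eucNorm (a' - a) := by
        simp only [hφ']
        rw [dotCLM_apply']
        exact cs_aux Finset.univ _ _
      have hl := hlip x (m s) η hη η' hη'
      have habs : (0:ℝ) ≤ |f x η (m s) - f x η' (m s)| := abs_nonneg _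
      have hg : eucNorm (Daf x η (m s) - Daf x η' (m s)) ≤ cL * Dη := by
        rw [hDη]; linarith
      rw [esw] at hcs
      calc |φ' s| ≤ eucNorm (Daf x η (m s) - Daf x η' (m s)) * X := hcs
      _ ≤ (cL * Dη) * X := mul_le_mul_of_nonneg_right hg hXnn
      _ = cL * Dη * X := by ring
    have hmvt := Convex.norm_image_sub_le_of_norm_hasDerivWithin_le
      (f := φ) (f' := φ') (s := Set.Icc (0:ℝ) 1)
      (fun s _ => (hφderiv s).hasDerivWithinAt)
      (fun s _ => by simpa using hbound s)
      (convex_Icc 0 1) (Set.left_mem_Icc.2 zero_le_one) (Set.right_mem_Icc.2 zero_le_one)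
    have hm1 : m 1 = a' := by
      rw [hm]; simp
    have hm0 : m 0 = a := by
      rw [hm]; simp
    have : |φ 1 - φ 0| ≤ cL * Dη * X := by
      have h10 : ‖(1:ℝ) - 0‖ = 1 := by norm_num
      calc |φ 1 - φ 0| = ‖φ 1 - φ 0‖ := rfl
      _ ≤ cL * Dη * X * ‖(1:ℝ) - 0‖ := hmvt
      _ = cL * Dη * X := by rw [h10]; ring
    have hφ1 : φ 1 = f x η a' - f x η' a' := by rw [hφ]; simp only [hm1]
    have hφ0 : φ 0 = f x η a - f x η' a := by rw [hφ]; simp only [hm0]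
    calc (f x η a' - f x η' a') - (f x η a - f x η' a) = φ 1 - φ 0 := by
          rw [hφ1, hφ0]
    _ ≤ |φ 1 - φ 0| := le_abs_self _
    _ ≤ cL * Dη * X := this
  -- Cauchy–Schwarz for the p-difference part
  have hO : offSum x a' p - offSum x a p + (offSum x a p' - offSum x a' p') ≤ X * Dp := by
    have heq : offSum x a' p - offSum x a p + (offSum x a p' - offSum x a' p')
        = ∑ y ∈ Finset.univ.erase x, (a' - a) y * (p - p') y := by
      unfold offSum
      rw [← Finset.sum_sub_distrib, ← Finset.sum_sub_distrib, ← Finset.sum_add_distrib]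
      apply Finset.sum_congr rfl
      intro y _
      simp only [Pi.sub_apply]
      ring
    have hcs := cs_aux (Finset.univ.erase x) (a' - a) (p - p')
    rw [esw, ← hDp] at hcs
    rw [heq]
    calc ∑ y ∈ Finset.univ.erase x, (a' - a) y * (p - p') y
        ≤ |∑ y ∈ Finset.univ.erase x, (a' - a) y * (p - p') y| := le_abs_self _
    _ ≤ X * Dp := hcs
  -- combine
  have hsum : 2 * cV * X ^ 2 ≤ cL * Dη * X + X * Dp := by nlinarith [k1, k2, hB, hO]
  rcases eq_or_lt_of_le hXnn with hX0 | hX0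
  · rw [← hX0]
    positivity
  · have hmax1 : cL ≤ max cL 1 := le_max_left _ _
    have hmax2 : (1:ℝ) ≤ max cL 1 := le_max_right _ _
    have t1 : cL * Dη * X ≤ max cL 1 * Dη * X :=
      mul_le_mul_of_nonneg_right (mul_le_mul_of_nonneg_right hmax1 hDηnn) hXnn
    have t2 : X * Dp ≤ max cL 1 * Dp * X := by
      rw [mul_comm X Dp]
      refine mul_le_mul_of_nonneg_right ?_ hXnn
      nlinarith
    have hid : (max cL 1 * (Dη + Dp)) * X = max cL 1 * Dη * X + max cL 1 * Dp * X := by ring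
    have hid2 : (2 * cV * X) * X = 2 * cV * X ^ 2 := by ring
    have hstep : (2 * cV * X) * X ≤ (max cL 1 * (Dη + Dp)) * X := by
      rw [hid, hid2]; linarith
    have hstep2 : 2 * cV * X ≤ max cL 1 * (Dη + Dp) := le_of_mul_le_mul_right hstep hX0
    have h2cV : (0:ℝ) < 2 * cV := by positivity
    calc X = (2 * cV * X) / (2 * cV) := by field_simp
    _ ≤ (max cL 1 * (Dη + Dp)) / (2 * cV) := (div_le_div_iff_of_pos_right h2cV).mpr hstep2
    _ = max cL 1 / (2 * cV) * (Dη + Dp) := by ring
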